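/- For n ≥ 2, every simple transposition shuffle of order n has length at least n(n-1)/2. -/

import Mathlib

open Finset

/-- The random permutation determined by outcomes `ω`: the composition `s₁ ∘ s₂ ∘ ⋯ ∘ s_ℓ`,
where `sᵢ` is the transposition swapping `a i` and `b i` if `ω i = true` and the identity
otherwise (convention `(σ * τ) x = σ (τ x)`). -/
def lazyPerm {n ℓ : ℕ} (a b : Fin ℓ → Fin n) (ω : Fin ℓ → Bool) : Equiv.Perm (Fin n) :=
  (List.ofFn fun i => if ω i then Equiv.swap (a i) (b i) else 1).prod

/-- The weight `∏ᵢ pᵢ^{ωᵢ} (1-pᵢ)^{1-ωᵢ}` of an outcome `ω`. -/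
def lazyWeight {ℓ : ℕ} (p : Fin ℓ → ℝ) (ω : Fin ℓ → Bool) : ℝ :=
  ∏ i, if ω i then p i else 1 - p i

/-- `(aᵢ, bᵢ, pᵢ)ᵢ` is a transposition shuffle of order `n`: a lazy transposition sequence
(`aᵢ ≠ bᵢ`, `pᵢ ∈ [0,1]`) such that the induced distribution on `Sₙ` is uniform. -/
def IsTranspositionShuffle (n ℓ : ℕ) (a b : Fin ℓ → Fin n) (p : Fin ℓ → ℝ) : Prop :=
  (∀ i, a i ≠ b i) ∧ (∀ i, 0 ≤ p i ∧ p i ≤ 1) ∧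
    ∀ α : Equiv.Perm (Fin n),
      ∑ ω ∈ univ.filter fun ω : Fin ℓ → Bool => lazyPerm a b ω = α,
        lazyWeight p ω = 1 / (n.factorial : ℝ)

/-- The number of inversions of a permutation of `Fin n`. -/
def invCount {n : ℕ} (π : Equiv.Perm (Fin n)) : ℕ :=
  (univ.filter fun q : Fin n × Fin n => q.1 < q.2 ∧ π q.2 < π q.1).card

lemma adjacent_swap_lt {n : ℕ} {k k' : Fin n} (hk : (k' : ℕ) = (k : ℕ) + 1)
    {x y : Fin n} (hxy : x < y) (hne : ¬(x = k ∧ y = k')) :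
    Equiv.swap k k' x < Equiv.swap k k' y := by
  have hkk' : k ≠ k' := by intro h; rw [h] at hk; omega
  by_cases hx1 : x = k
  · by_cases hy2 : y = k'
    · exact absurd ⟨hx1, hy2⟩ hne
    · have hy1 : y ≠ k := (hx1 ▸ ne_of_gt hxy)
      subst hx1
      rw [Equiv.swap_apply_left, Equiv.swap_apply_of_ne_of_ne hy1 hy2, Fin.lt_def]
      have h1 : (x : ℕ) < (y : ℕ) := hxy
      have h2 : (y : ℕ) ≠ (k' : ℕ) := fun h => hy2 (Fin.ext h)
      omega
  · by_cases hx2 : x = k'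
    · have hy1 : y ≠ k := by
        intro h
        have : (x : ℕ) < (y : ℕ) := hxy
        rw [hx2, h] at this
        omega
      have hy2 : y ≠ k' := (hx2 ▸ ne_of_gt hxy)
      subst hx2
      rw [Equiv.swap_apply_right, Equiv.swap_apply_of_ne_of_ne hy1 hy2, Fin.lt_def]
      have h1 : (x : ℕ) < (y : ℕ) := hxy
      omega
    · by_cases hy1 : y = k
      · subst hy1
        rw [Equiv.swap_apply_left, Equiv.swap_apply_of_ne_of_ne hx1 hx2, Fin.lt_def]
        have h1 : (x : ℕ) < (y : ℕ) := hxy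
        omega
      · by_cases hy2 : y = k'
        · subst hy2
          rw [Equiv.swap_apply_right, Equiv.swap_apply_of_ne_of_ne hx1 hx2, Fin.lt_def]
          have h1 : (x : ℕ) < (y : ℕ) := hxy
          have h2 : (x : ℕ) ≠ (k : ℕ) := fun h => hx1 (Fin.ext h)
          omega
        · rw [Equiv.swap_apply_of_ne_of_ne hx1 hx2,
            Equiv.swap_apply_of_ne_of_ne hy1 hy2]
          exact hxy

lemma invCount_swap_mul_le {n : ℕ} {k k' : Fin n} (hk : (k' : ℕ) = (k : ℕ) + 1)
    (π : Equiv.Perm (Fin n)) :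
    invCount (Equiv.swap k k' * π) ≤ invCount π + 1 := by
  classical
  set q0 : Fin n × Fin n := (π⁻¹ k, π⁻¹ k') with hq0
  have hsub : (univ.filter fun q : Fin n × Fin n =>
      q.1 < q.2 ∧ (Equiv.swap k k' * π) q.2 < (Equiv.swap k k' * π) q.1) ⊆
      insert q0 (univ.filter fun q : Fin n × Fin n => q.1 < q.2 ∧ π q.2 < π q.1) := by
    intro q hq
    simp only [mem_filter, mem_univ, true_and] at hq
    obtain ⟨h12, hs⟩ := hq
    by_cases hinv : π q.2 < π q.1
    · exact Finset.mem_insert_of_mem (by simp [h12, hinv])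
    · have hne : π q.1 ≠ π q.2 := fun h => absurd (π.injective h) (ne_of_lt h12)
      have hlt : π q.1 < π q.2 := lt_of_le_of_ne (not_lt.mp hinv) hne
      have : π q.1 = k ∧ π q.2 = k' := by
        by_contra hcon
        exact absurd (adjacent_swap_lt hk hlt hcon) (by
          simpa [Equiv.Perm.mul_apply] using not_lt.mpr (le_of_lt hs))
      have h1 : q.1 = π⁻¹ k := by rw [← this.1]; simp
      have h2 : q.2 = π⁻¹ k' := by rw [← this.2]; simp
      have hqq : q = q0 := Prod.ext h1 h2
      rw [hqq]
      exact Finset.mem_insert_self q0 _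
  calc invCount (Equiv.swap k k' * π)
      ≤ (insert q0 (univ.filter fun q : Fin n × Fin n =>
          q.1 < q.2 ∧ π q.2 < π q.1)).card := Finset.card_le_card hsub
    _ ≤ invCount π + 1 := Finset.card_insert_le _ _

lemma invCount_prod_le {n : ℕ} (L : List (Equiv.Perm (Fin n)))
    (hL : ∀ σ ∈ L, σ = 1 ∨ ∃ k k' : Fin n, (k' : ℕ) = (k : ℕ) + 1 ∧ σ = Equiv.swap k k') :
    invCount L.prod ≤ L.length := by
  induction L with
  | nil =>
    simp only [List.prod_nil, List.length_nil, Nat.le_zero]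
    unfold invCount
    rw [Finset.card_eq_zero]
    apply Finset.filter_false_of_mem
    rintro q - ⟨h1, h2⟩
    simp only [Equiv.Perm.one_apply] at h2
    exact absurd h2 (not_lt.mpr h1.le)
  | cons σ L ih =>
    have hrest := ih fun τ hτ => hL τ (List.mem_cons_of_mem σ hτ)
    rw [List.prod_cons, List.length_cons]
    rcases hL σ (List.mem_cons_self (a := σ) (l := L)) with h1 | ⟨k, k', hk, hσ⟩
    · rw [h1, one_mul]; omega
    · rw [hσ]
      have := invCount_swap_mul_le hk L.prod
      omega

lemma invCount_revPerm {n : ℕ} : invCount (Fin.revPerm : Equiv.Perm (Fin n)) = n * (n - 1) / 2 := by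
  classical
  have hcond : ∀ q : Fin n × Fin n,
      (q.1 < q.2 ∧ Fin.revPerm q.2 < Fin.revPerm q.1) ↔ q.1 < q.2 := by
    intro q
    simp only [Fin.revPerm_apply, Fin.rev_lt_rev]
    tauto
  have : invCount (Fin.revPerm : Equiv.Perm (Fin n)) =
      (univ.filter fun q : Fin n × Fin n => q.1 < q.2).card := by
    unfold invCount
    congr 1
    exact Finset.filter_congr fun q _ => hcond q
  rw [this]
  have hcard : (univ.filter fun q : Fin n × Fin n => q.1 < q.2).card
      = ∑ y : Fin n, (y : ℕ) := by
    rw [Finset.card_filter]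
    rw [Fintype.sum_prod_type_right]
    refine Finset.sum_congr rfl fun y _ => ?_
    rw [← Finset.card_filter]
    have : (univ.filter fun x : Fin n => x < y) = Finset.Iio y := by
      ext x; simp
    rw [this, Fin.card_Iio]
  rw [hcard, Fin.sum_univ_eq_sum_range (fun i => i) n]
  have := Finset.sum_range_id_mul_two n
  omega

/-- for `n ≥ 2`, every simple transposition shuffle of order `n`
(one with `bᵢ = aᵢ + 1` for all `i`) has length at least `n(n-1)/2`. -/
theorem simple_shuffle_length_lower_bound (n ℓ : ℕ) (hn : 2 ≤ n)
    (a b : Fin ℓ → Fin n) (p : Fin ℓ → ℝ)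
    (hsimple : ∀ i, (b i : ℕ) = (a i : ℕ) + 1)
    (h : IsTranspositionShuffle n ℓ a b p) :
    n * (n - 1) / 2 ≤ ℓ := by
  classical
  obtain ⟨-, -, huniform⟩ := h
  -- there exists an outcome realizing the reversal permutation
  have hsum := huniform Fin.revPerm
  have hpos : (1 : ℝ) / (n.factorial : ℝ) ≠ 0 := by
    have : (0 : ℝ) < n.factorial := by positivity
    positivity
  have hne : (univ.filter fun ω : Fin ℓ → Bool => lazyPerm a b ω = Fin.revPerm).Nonempty := by
    by_contra hc
    rw [Finset.not_nonempty_iff_eq_empty] at hc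
    rw [hc, Finset.sum_empty] at hsum
    exact hpos hsum.symm
  obtain ⟨ω, hω⟩ := hne
  rw [Finset.mem_filter] at hω
  have hωr : lazyPerm a b ω = Fin.revPerm := hω.2
  -- bound the inversion count
  have hbound : invCount (lazyPerm a b ω) ≤ ℓ := by
    have := invCount_prod_le (n := n)
      (List.ofFn fun i => if ω i then Equiv.swap (a i) (b i) else 1) ?_
    · simpa [lazyPerm, List.length_ofFn] using this
    · rw [List.forall_mem_ofFn_iff]
      intro i
      by_cases hωi : ω i
      · right
        exact ⟨a i, b i, hsimple i, by simp [hωi]⟩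
      · left; simp [hωi]
  rw [hωr, invCount_revPerm] at hbound
  exact hbound
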